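/- Fix τ > 0 and let u : [−τ,∞) → ℝ be a nonnegative continuous function with piecewise continuous derivative on (τ,∞), such that for almost all t > τ the integro-differential inequality u'(t) ≤ (α/τ) ∫_{t−τ}^t u(s−τ) ds − β u(t) holds, with constants 0 < α < β. Then there exists a unique γ ∈ (0, β − α) such that β − γ = α e^{γτ} (e^{γτ} − 1)/(γτ), and u(t) ≤ (max_{s∈[−τ,τ]} u(s)) e^{−γ(t−τ)} for all t ≥ τ. -/

import Mathlib

open Real Set Filter MeasureTheory

section GronwallHalanayAux

open Topology

lemma my_antitone_of_deriv_nonpos_countable {f f' : ℝ → ℝ} {a b : ℝ} {S : Set ℝ}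
    (hS : S.Countable) (hab : a ≤ b) (hf : ContinuousOn f (Icc a b))
    (hd : ∀ x ∈ Ioo a b, x ∉ S → HasDerivAt f (f' x) x)
    (hd0 : ∀ x ∈ Ioo a b, x ∉ S → f' x ≤ 0) :
    f b ≤ f a := by
  have key : ∀ ε : ℝ, 0 < ε → f b ≤ f a + ε * (b - a + 3) := by
    intro ε hε
    obtain ⟨e, he⟩ : ∃ e : ℕ → ℝ, insert b S = range e :=
      Set.Countable.exists_eq_range (hS.insert b) (insert_nonempty _ _)
    have heS : S ⊆ range e := he ▸ subset_insert _ _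
    set w : ℕ → ℝ := fun n => (1 / 2 : ℝ) ^ n with hw_def
    have hw : Summable w := summable_geometric_two
    have hwpos : ∀ n, 0 < w n := fun n => by positivity
    have hsum : ∀ x : ℝ, Summable (fun n => if e n < x then w n else 0) := fun x =>
      hw.of_nonneg_of_le (fun n => by by_cases h : e n < x <;> simp [h, (hwpos n).le])
        (fun n => by by_cases h : e n < x <;> simp [h, (hwpos n).le])
    set c : ℝ → ℝ := fun x => ∑' n, if e n < x then w n else 0 with hc_def
    have c_nonneg : ∀ x, 0 ≤ c x := fun x =>
      tsum_nonneg (fun n => by by_cases h : e n < x <;> simp [h, (hwpos n).le])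
    have c_mono : Monotone c := by
      intro x y hxy
      refine Summable.tsum_le_tsum (fun n => ?_) (hsum x) (hsum y)
      by_cases h : e n < x
      · simp only [if_pos h, if_pos (h.trans_le hxy)]; exact le_rfl
      · simp only [if_neg h]
        by_cases h' : e n < y <;> simp [h', (hwpos n).le]
    have c_le : ∀ x, c x ≤ 2 := by
      intro x
      have h1 : c x ≤ ∑' n, w n :=
        Summable.tsum_le_tsum (fun n => by by_cases h : e n < x <;> simp [h, (hwpos n).le]) (hsum x) hw
      have h2 : ∑' n, w n = 2 := tsum_geometric_two
      linarith
    have c_jump : ∀ n₀ : ℕ, ∀ z : ℝ, e n₀ < z → c (e n₀) + w n₀ ≤ c z := by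
      intro n₀ z hz
      have h1 : Summable (fun n => if n = n₀ then w n₀ else 0) :=
        hw.of_nonneg_of_le (fun n => by by_cases h : n = n₀ <;> simp [h, (hwpos n₀).le])
          (fun n => by by_cases h : n = n₀ <;> simp [h, (hwpos n).le])
      have h2 : c (e n₀) + w n₀
          = ∑' n, ((if e n < e n₀ then w n else 0) + if n = n₀ then w n₀ else 0) := by
        rw [Summable.tsum_add (hsum _) h1, tsum_ite_eq]
      rw [h2]
      refine Summable.tsum_le_tsum (fun n => ?_) ((hsum _).add h1) (hsum z)
      by_cases hn : n = n₀
      · subst hn; simp [lt_irrefl, hz]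
      · simp only [if_neg hn, add_zero]
        by_cases h : e n < e n₀
        · simp only [if_pos h, if_pos (h.trans hz)]; exact le_rfl
        · simp only [if_neg h]
          by_cases h' : e n < z <;> simp [h', (hwpos n).le]
    set B : ℝ → ℝ := fun x => f a + ε * (x - a) + ε * c x + ε with hB_def
    have B_mono : Monotone B := by
      intro x y hxy
      have := c_mono hxy
      simp only [hB_def]
      nlinarith
    set A : Set ℝ := {x | x ∈ Icc a b ∧ ∀ y ∈ Icc a x, f y ≤ B y} with hA_def
    have haA : a ∈ A := by
      refine ⟨⟨le_rfl, hab⟩, fun y hy => ?_⟩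
      have hya : y = a := le_antisymm hy.2 hy.1
      rw [hya]
      simp only [hB_def]
      nlinarith [c_nonneg a, mul_nonneg hε.le (c_nonneg a)]
    have hbddA : BddAbove A := ⟨b, fun x hx => hx.1.2⟩
    have hAne : A.Nonempty := ⟨a, haA⟩
    set m := sSup A with hm_def
    have ham : a ≤ m := le_csSup hbddA haA
    have hmb : m ≤ b := csSup_le hAne (fun x hx => hx.1.2)
    have hlt : ∀ y, a ≤ y → y < m → f y ≤ B y := by
      intro y hy1 hy2
      obtain ⟨x, hxA, hyx⟩ := exists_lt_of_lt_csSup hAne hy2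
      exact hxA.2 y ⟨hy1, hyx.le⟩
    have hfmB : f m ≤ B m := by
      rcases eq_or_lt_of_le ham with h' | h'
      · rw [← h']
        exact haA.2 a ⟨le_rfl, le_rfl⟩
      · have keyB : ∀ z ∈ Ioo a m, f z ≤ B m := fun z hz =>
          (hlt z hz.1.le hz.2).trans (B_mono hz.2.le)
        have hne : (𝓝[Ioo a m] m).NeBot := by
          rw [← mem_closure_iff_nhdsWithin_neBot, closure_Ioo h'.ne]
          exact ⟨h'.le, le_rfl⟩
        exact le_of_tendsto
          ((hf m ⟨ham, hmb⟩).mono (fun z hz => ⟨hz.1.le, hz.2.le.trans hmb⟩))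
          (eventually_nhdsWithin_of_forall keyB)
    have hmA : m ∈ A := by
      refine ⟨⟨ham, hmb⟩, fun y hy => ?_⟩
      rcases eq_or_lt_of_le hy.2 with h | h
      · rw [h]; exact hfmB
      · exact hlt y hy.1 h
    have hmbe : m = b := by
      by_contra hne
      have hmb' : m < b := lt_of_le_of_ne hmb hne
      have htendsr : Tendsto f (𝓝[>] m) (𝓝 (f m)) := by
        rw [← nhdsWithin_Ioo_eq_nhdsGT hmb']
        exact (hf m ⟨ham, hmb⟩).mono (fun z hz => ⟨ham.trans hz.1.le, hz.2.le⟩)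
      have hstep : ∀ᶠ z in 𝓝[>] m, f z ≤ B z := by
        by_cases hfm : f m < B m
        · filter_upwards [htendsr.eventually_lt_const hfm, self_mem_nhdsWithin] with z hz hz'
          exact hz.le.trans (B_mono (le_of_lt hz'))
        · have hfm' : f m = B m := le_antisymm hfmB (not_lt.1 hfm)
          by_cases hmS : m ∈ S
          · obtain ⟨n₀, hn₀⟩ := heS hmS
            have hlt2 : f m < f m + ε * w n₀ := by nlinarith [hwpos n₀, mul_pos hε (hwpos n₀)]
            filter_upwards [htendsr.eventually_lt_const hlt2, self_mem_nhdsWithin] with z hz hz'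
            have hz'' : (m : ℝ) < z := hz'
            have hjump := c_jump n₀ z (hn₀ ▸ hz'')
            rw [hn₀] at hjump
            have hBz : B m + ε * w n₀ ≤ B z := by
              simp only [hB_def]
              nlinarith
            rw [hfm'] at hz
            linarith
          · have ham' : a < m := by
              rcases eq_or_lt_of_le ham with h' | h'
              · exfalso
                rw [← h'] at hfm'
                simp only [hB_def] at hfm'
                nlinarith [c_nonneg a, mul_nonneg hε.le (c_nonneg a)]
              · exact h'
            have hder := hd m ⟨ham', hmb'⟩ hmS
            have hslope : Tendsto (slope f m) (𝓝[>] m) (𝓝 (f' m)) :=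
              (hasDerivAt_iff_tendsto_slope.1 hder).mono_left
                (nhdsWithin_mono m (fun z hz => ne_of_gt hz))
            have hεf : f' m < ε := lt_of_le_of_lt (hd0 m ⟨ham', hmb'⟩ hmS) hε
            filter_upwards [hslope.eventually_lt_const hεf, self_mem_nhdsWithin] with z hz hz'
            have hz'' : (m : ℝ) < z := hz'
            rw [slope_def_field] at hz
            have h1 : f z < f m + ε * (z - m) := by
              have := (div_lt_iff₀ (by linarith : (0:ℝ) < z - m)).1 hz
              linarith
            have h2 : B m + ε * (z - m) ≤ B z := by
              have := c_mono hz''.le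
              simp only [hB_def]
              nlinarith
            rw [hfm'] at h1
            linarith
      obtain ⟨u', hu', hsub⟩ := mem_nhdsGT_iff_exists_Ioc_subset.1 hstep
      set m' := min u' b with hm'_def
      have hmm' : m < m' := lt_min hu' hmb'
      have hm'A : m' ∈ A := by
        refine ⟨⟨ham.trans hmm'.le, min_le_right _ _⟩, fun y hy => ?_⟩
        by_cases hym : y ≤ m
        · exact hmA.2 y ⟨hy.1, hym⟩
        · exact hsub ⟨not_le.1 hym, hy.2.trans (min_le_left _ _)⟩
      exact absurd (le_csSup hbddA hm'A) (not_le.2 hmm')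
    have hbA : b ∈ A := hmbe ▸ hmA
    have h1 := hbA.2 b ⟨hab, le_rfl⟩
    have h2 := c_le b
    simp only [hB_def] at h1
    nlinarith [mul_nonneg hε.le (c_nonneg b)]
  refine le_of_forall_pos_le_add fun ε' hε' => ?_
  have hd3 : (0:ℝ) < b - a + 3 := by linarith
  have := key (ε' / (b - a + 3)) (by positivity)
  rwa [div_mul_cancel₀ _ (ne_of_gt hd3)] at this

lemma my_gamma_exists {τ α β : ℝ} (hτ : 0 < τ) (hα : 0 < α) (hαβ : α < β) :
    ∃ γ : ℝ, γ ∈ Ioo 0 (β - α) ∧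
      β - γ = α * exp (γ * τ) * ((exp (γ * τ) - 1) / (γ * τ)) ∧
      (∀ γ' ∈ Ioo 0 (β - α),
        β - γ' = α * exp (γ' * τ) * ((exp (γ' * τ) - 1) / (γ' * τ)) → γ' = γ) := by
  set q : ℝ → ℝ := fun x => exp x * ((exp x - 1) / x) with hq_def
  -- slope of exp at 0 is strictly monotone
  have hsl : ∀ x y : ℝ, 0 < x → x < y → (exp x - 1) / x < (exp y - 1) / y := by
    intro x y hx hxy
    have := strictConvexOn_exp.secant_strict_mono (a := 0) (mem_univ _) (mem_univ x)
      (mem_univ y) (ne_of_gt hx) (ne_of_gt (hx.trans hxy)) hxy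
    simpa [exp_zero] using this
  have hslpos : ∀ x : ℝ, 0 < x → 1 < (exp x - 1) / x := by
    intro x hx
    rw [lt_div_iff₀ hx]
    have := add_one_lt_exp (ne_of_gt hx)
    linarith
  have hq_mono : ∀ x y : ℝ, 0 < x → x < y → q x < q y := by
    intro x y hx hxy
    have h1 : (0:ℝ) < (exp x - 1) / x := lt_trans one_pos (hslpos x hx)
    have h2 : exp x < exp y := exp_lt_exp.2 hxy
    have h3 := hsl x y hx hxy
    have h4 : (0:ℝ) < exp y := exp_pos y
    calc exp x * ((exp x - 1) / x) < exp y * ((exp x - 1) / x) := by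
          exact mul_lt_mul_of_pos_right h2 h1
      _ < exp y * ((exp y - 1) / y) := by exact mul_lt_mul_of_pos_left h3 h4
  set f : ℝ → ℝ := fun γ => γ + α * q (γ * τ) with hf_def
  have hf_mono : StrictMonoOn f (Ioi 0) := by
    intro x hx y hy hxy
    have h1 : q (x * τ) < q (y * τ) :=
      hq_mono _ _ (mul_pos hx hτ) (by nlinarith [mem_Ioi.1 hx])
    simp only [hf_def]
    nlinarith
  -- f (β - α) > β
  have hβα : 0 < β - α := sub_pos.2 hαβ
  have hfb : β < f (β - α) := by
    have hx : 0 < (β - α) * τ := mul_pos hβα hτ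
    have h1 : 1 < (exp ((β-α)*τ) - 1) / ((β-α)*τ) := hslpos _ hx
    have h2 : 1 < exp ((β-α)*τ) := by rw [← exp_zero]; exact exp_lt_exp.2 hx
    have : 1 < q ((β-α)*τ) := by
      simp only [hq_def]
      nlinarith
    simp only [hf_def]
    nlinarith
  -- f tends to α at 0+
  have hlim : Tendsto f (𝓝[>] (0:ℝ)) (𝓝 α) := by
    have h0 : Tendsto (fun y : ℝ => (exp y - 1) / y) (𝓝[≠] (0:ℝ)) (𝓝 1) := by
      have := hasDerivAt_iff_tendsto_slope.1 (Real.hasDerivAt_exp 0)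
      rw [exp_zero] at this
      refine this.congr' ?_
      filter_upwards [self_mem_nhdsWithin] with y hy
      rw [slope_def_field, exp_zero, sub_zero]
    have hmul : Tendsto (fun γ : ℝ => γ * τ) (𝓝[>] (0:ℝ)) (𝓝[≠] (0:ℝ)) := by
      apply tendsto_nhdsWithin_of_tendsto_nhds_of_eventually_within
      · have : Tendsto (fun γ : ℝ => γ * τ) (𝓝 (0:ℝ)) (𝓝 (0 * τ)) :=
          (continuous_id.mul continuous_const).tendsto 0
        rw [zero_mul] at this
        exact this.mono_left nhdsWithin_le_nhds
      · filter_upwards [self_mem_nhdsWithin] with γ hγ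
        exact ne_of_gt (mul_pos hγ hτ)
    have hqlim : Tendsto q (𝓝[≠] (0:ℝ)) (𝓝 1) := by
      have hexp : Tendsto (fun x : ℝ => exp x) (𝓝[≠] (0:ℝ)) (𝓝 1) := by
        have := (Real.continuous_exp.tendsto 0)
        rw [exp_zero] at this
        exact this.mono_left nhdsWithin_le_nhds
      have := hexp.mul h0
      rw [mul_one] at this
      exact this
    have h1 : Tendsto (fun γ : ℝ => α * q (γ * τ)) (𝓝[>] (0:ℝ)) (𝓝 α) := by
      have := (tendsto_const_nhds (x := α)).mul (hqlim.comp hmul)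
      rw [mul_one] at this
      exact this
    have h2 : Tendsto (fun γ : ℝ => γ) (𝓝[>] (0:ℝ)) (𝓝 0) :=
      tendsto_id.mono_left nhdsWithin_le_nhds
    have := h2.add h1
    rw [zero_add] at this
    exact this
  -- pick γ₀ with f γ₀ < β
  obtain ⟨γ₀, hγ₀f, hγ₀mem⟩ : ∃ γ₀, f γ₀ < β ∧ γ₀ ∈ Ioo 0 (β - α) := by
    have h1 : ∀ᶠ γ in 𝓝[>] (0:ℝ), f γ < β := hlim.eventually_lt_const hαβ
    have h2 : Ioo (0:ℝ) (β - α) ∈ 𝓝[>] (0:ℝ) := Ioo_mem_nhdsGT_of_mem ⟨le_rfl, hβα⟩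
    exact (h1.and h2).exists
  -- continuity of f on [γ₀, β - α]
  have hf_cont : ContinuousOn f (Icc γ₀ (β - α)) := by
    intro x hx
    have hx0 : 0 < x := lt_of_lt_of_le hγ₀mem.1 hx.1
    apply ContinuousAt.continuousWithinAt
    have : ContinuousAt (fun γ : ℝ => γ + α * (exp (γ*τ) * ((exp (γ*τ) - 1)/(γ*τ)))) x := by
      apply continuousAt_id.add
      apply continuousAt_const.mul
      apply ContinuousAt.mul
      · exact (Real.continuous_exp.comp (continuous_id.mul continuous_const)).continuousAt
      · apply ContinuousAt.div
        · exact ((Real.continuous_exp.comp (continuous_id.mul continuous_const)).sub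
            continuous_const).continuousAt
        · exact (continuous_id.mul continuous_const).continuousAt
        · exact ne_of_gt (mul_pos hx0 hτ)
    exact this
  -- IVT
  obtain ⟨γ, hγmem, hγval⟩ : ∃ γ ∈ Ioo γ₀ (β - α), f γ = β := by
    have := intermediate_value_Ioo (le_of_lt hγ₀mem.2) hf_cont
    obtain ⟨γ, hγ, hγ'⟩ := this ⟨hγ₀f, hfb⟩
    exact ⟨γ, hγ, hγ'⟩
  have hγIoo : γ ∈ Ioo 0 (β - α) := ⟨lt_trans hγ₀mem.1 hγmem.1, hγmem.2⟩
  refine ⟨γ, hγIoo, ?_, ?_⟩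
  · simp only [hf_def, hq_def] at hγval
    linarith [hγval]
  · intro γ' hγ' heq
    have h1 : f γ' = β := by
      simp only [hf_def, hq_def]
      linarith [heq]
    have h2 : f γ = β := hγval
    exact hf_mono.injOn (mem_Ioi.2 hγ'.1) (mem_Ioi.2 hγIoo.1) (h1.trans h2.symm)

end GronwallHalanayAux

section
open Topology

theorem gronwall_halanay_variant
    {τ α β : ℝ} (hτ : 0 < τ) (hα : 0 < α) (hαβ : α < β)
    (u u' : ℝ → ℝ)
    (hu_cont : ContinuousOn u (Ici (-τ)))
    (hu_nonneg : ∀ t, -τ ≤ t → 0 ≤ u t)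
    (hu_deriv : ∃ S : Set ℝ, S.Countable ∧
      (∀ t ∈ Ioi τ, t ∉ S → HasDerivAt u (u' t) t) ∧
      ContinuousOn u' (Ioi τ \ S))
    (hineq : ∀ᵐ t ∂volume, τ < t →
      u' t ≤ α / τ * (∫ s in (t - τ)..t, u (s - τ)) - β * u t) :
    ∃ γ : ℝ, γ ∈ Ioo 0 (β - α) ∧
      β - γ = α * exp (γ * τ) * ((exp (γ * τ) - 1) / (γ * τ)) ∧
      (∀ γ' ∈ Ioo 0 (β - α),
        β - γ' = α * exp (γ' * τ) * ((exp (γ' * τ) - 1) / (γ' * τ)) → γ' = γ) ∧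
      ∀ t, τ ≤ t → u t ≤ sSup (u '' Icc (-τ) τ) * exp (-γ * (t - τ)) := by
  obtain ⟨S, hScount, hSderiv, hScont⟩ := hu_deriv
  obtain ⟨γ, hγmem, hchar, huniq⟩ := my_gamma_exists hτ hα hαβ
  refine ⟨γ, hγmem, hchar, huniq, ?_⟩
  have hγpos : 0 < γ := hγmem.1
  have hβγ : 0 < β - γ := by have := hγmem.2; have : γ < β - α := this; nlinarith
  have hττ : -τ ≤ τ := by linarith
  set M := sSup (u '' Icc (-τ) τ) with hM_def
  have hbdd : BddAbove (u '' Icc (-τ) τ) :=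
    (isCompact_Icc.image_of_continuousOn (hu_cont.mono Icc_subset_Ici_self)).bddAbove
  have hM_ub : ∀ s ∈ Icc (-τ) τ, u s ≤ M := fun s hs =>
    le_csSup hbdd (mem_image_of_mem u hs)
  have hM0 : 0 ≤ M := (hu_nonneg τ hττ).trans (hM_ub τ ⟨hττ, le_rfl⟩)
  -- the delayed function, extended continuously
  set v : ℝ → ℝ := fun s => u (max (s - τ) (-τ)) with hv_def
  have hv_cont : Continuous v :=
    hu_cont.comp_continuous ((continuous_id.sub continuous_const).max continuous_const)
      (fun x => mem_Ici.2 (le_max_right _ _))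
  have hv_eq : ∀ s : ℝ, 0 ≤ s → v s = u (s - τ) := by
    intro s hs
    simp only [hv_def]
    rw [max_eq_left (by linarith)]
  -- primitive
  set G : ℝ → ℝ := fun x => ∫ s in (0:ℝ)..x, v s with hG_def
  have hG_cont : Continuous G :=
    intervalIntegral.continuous_primitive (fun a b => hv_cont.intervalIntegrable a b) 0
  have hGint : ∀ t : ℝ, τ < t → (∫ s in (t - τ)..t, u (s - τ)) = G t - G (t - τ) := by
    intro t ht
    have h1 : (∫ s in (t - τ)..t, u (s - τ)) = ∫ s in (t - τ)..t, v s := by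
      apply intervalIntegral.integral_congr
      intro x hx
      rw [uIcc_of_le (by linarith)] at hx
      exact (hv_eq x (by linarith [hx.1])).symm
    rw [h1, hG_def]
    rw [← intervalIntegral.integral_interval_sub_left
      (hv_cont.intervalIntegrable 0 t) (hv_cont.intervalIntegrable 0 (t - τ))]
  set F : ℝ → ℝ := fun t => α / τ * (G t - G (t - τ)) - β * u t with hF_def
  have hF_cont : ContinuousOn F (Ioi τ) := by
    apply ContinuousOn.sub
    · exact (continuous_const.mul (hG_cont.sub
        (hG_cont.comp (continuous_id.sub continuous_const)))).continuousOn
    · exact continuousOn_const.mul (hu_cont.mono (fun x hx => by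
        simp only [mem_Ici]; have : τ < x := hx; linarith))
  -- upgrade a.e. inequality to pointwise off S
  have hptwise : ∀ t ∈ Ioi τ, t ∉ S → u' t ≤ F t := by
    intro t ht htS
    set P : Set ℝ := {z | τ < z → u' z ≤ α / τ * (∫ s in (z - τ)..z, u (s - τ)) - β * u z}
      with hP_def
    have hPae : volume Pᶜ = 0 := hineq
    set D : Set ℝ := (Ioi t ∩ P) \ S with hD_def
    have hDsub : D ⊆ Ioi τ \ S := fun z hz =>
      ⟨mem_Ioi.2 (lt_trans ht hz.1.1), hz.2⟩
    have hne : (𝓝[D] t).NeBot := by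
      rw [← mem_closure_iff_nhdsWithin_neBot, Metric.mem_closure_iff]
      intro δ hδ
      by_contra hempty
      push_neg at hempty
      have hsub : Ioo t (t + δ) ⊆ Pᶜ ∪ S := by
        intro z hz
        by_contra hzc
        rw [mem_union] at hzc
        push_neg at hzc
        have hzD : z ∈ D := ⟨⟨hz.1, not_not.1 (fun h => hzc.1 h)⟩, hzc.2⟩
        have := hempty z hzD
        rw [Real.dist_eq, abs_sub_comm] at this
        rw [abs_of_pos (by linarith [hz.1] : (0:ℝ) < z - t)] at this
        linarith [hz.2]
      have h0 : volume (Ioo t (t + δ)) = 0 :=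
        measure_mono_null hsub
          (measure_union_null hPae (hScount.measure_zero volume))
      rw [Real.volume_Ioo] at h0
      have : (0:ℝ) < t + δ - t := by linarith
      exact absurd h0 (ne_of_gt (ENNReal.ofReal_pos.2 this))
    have htu' : Tendsto u' (𝓝[D] t) (𝓝 (u' t)) :=
      (hScont t ⟨ht, htS⟩).mono hDsub
    have htF : Tendsto F (𝓝[D] t) (𝓝 (F t)) :=
      (hF_cont t ht).mono (fun z hz => (hDsub hz).1)
    refine le_of_tendsto_of_tendsto htu' htF (eventually_nhdsWithin_of_forall ?_)
    intro z hz
    have hzτ : τ < z := lt_trans ht hz.1.1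
    have := hz.1.2 hzτ
    rw [hGint z hzτ] at this
    exact this
  -- key derivative bound under induction hypothesis
  have hanti : ∀ s : ℝ, HasDerivAt (fun y => -(1/γ) * exp (-γ * y)) (exp (-γ * s)) s := by
    intro s
    have h1 : HasDerivAt (fun y : ℝ => -γ * y) (-γ * 1) s := (hasDerivAt_id s).const_mul (-γ)
    have h2 := h1.exp
    have h3 := h2.const_mul (-(1/γ))
    refine h3.congr_deriv ?_
    rw [show -(1/γ) * (exp (-γ * s) * (-γ * 1)) = exp (-γ*s) * (γ/γ) by ring, div_self (ne_of_gt hγpos), mul_one]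
  have hkey : ∀ x : ℝ, τ < x → x ∉ S →
      (∀ s ∈ Icc (-τ) (x - τ), u s ≤ M * exp (-γ * (s - τ))) →
      u' x ≤ M * (β - γ) * exp (-γ * (x - τ)) - β * u x := by
    intro x hx hxS hIH
    have h1 := hptwise x hx hxS
    have hbound : ∀ s ∈ Icc (x - τ) x, v s ≤ M * (exp (2*γ*τ) * exp (-γ * s)) := by
      intro s hs
      have hs0 : (0:ℝ) < s := by linarith [hs.1]
      rw [hv_eq s hs0.le]
      have hsm : s - τ ∈ Icc (-τ) (x - τ) := ⟨by linarith [hs.1], by linarith [hs.2]⟩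
      have := hIH (s - τ) hsm
      have hexp : exp (-γ * (s - τ - τ)) = exp (2*γ*τ) * exp (-γ * s) := by
        rw [← exp_add]; ring_nf
      rw [hexp] at this
      linarith [this]
    have hGle : G x - G (x - τ) ≤ M * exp (2*γ*τ) * ((-(1/γ)) * exp (-γ*x) - (-(1/γ)) * exp (-γ*(x-τ))) := by
      have hGeq : G x - G (x - τ) = ∫ s in (x - τ)..x, v s := by
        rw [hG_def, ← intervalIntegral.integral_interval_sub_left
          (hv_cont.intervalIntegrable 0 x) (hv_cont.intervalIntegrable 0 (x - τ))]
      have hmono : (∫ s in (x - τ)..x, v s) ≤ ∫ s in (x - τ)..x, M * (exp (2*γ*τ) * exp (-γ * s)) := by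
        apply intervalIntegral.integral_mono_on (by linarith)
          (hv_cont.intervalIntegrable _ _)
          ((continuous_const.mul (continuous_const.mul
            (Real.continuous_exp.comp (continuous_const.mul continuous_id)))).intervalIntegrable _ _)
        exact hbound
      have hInt : (∫ s in (x - τ)..x, exp (-γ * s))
          = (-(1/γ)) * exp (-γ*x) - (-(1/γ)) * exp (-γ*(x-τ)) :=
        intervalIntegral.integral_eq_sub_of_hasDerivAt (fun s _ => hanti s)
          ((Real.continuous_exp.comp (continuous_const.mul continuous_id)).intervalIntegrable _ _)
      have hconst : (∫ s in (x - τ)..x, M * (exp (2*γ*τ) * exp (-γ * s)))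
          = M * exp (2*γ*τ) * ∫ s in (x - τ)..x, exp (-γ * s) := by
        rw [← intervalIntegral.integral_const_mul]
        apply intervalIntegral.integral_congr
        intro s _
        ring
      rw [hGeq]
      rw [hconst, hInt] at hmono
      exact hmono
    have halg : α / τ * (M * exp (2*γ*τ) * ((-(1/γ)) * exp (-γ*x) - (-(1/γ)) * exp (-γ*(x-τ))))
        = M * (β - γ) * exp (-γ * (x - τ)) := by
      rw [hchar]
      have hE1 : exp (-γ*x) = exp (-γ*(x-τ)) * (exp (γ*τ))⁻¹ := by
        rw [← exp_neg, ← exp_add]; ring_nf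
      have hE2 : exp (2*γ*τ) = exp (γ*τ) * exp (γ*τ) := by
        rw [← exp_add]; ring_nf
      rw [hE1, hE2]
      have hγτ : γ * τ ≠ 0 := ne_of_gt (mul_pos hγpos hτ)
      have hEne : exp (γ*τ) ≠ 0 := (exp_pos _).ne'
      field_simp
      ring
    have h2 : α / τ * (G x - G (x - τ)) ≤ M * (β - γ) * exp (-γ * (x - τ)) := by
      rw [← halg]
      exact mul_le_mul_of_nonneg_left hGle (by positivity)
    simp only [hF_def] at h1
    linarith
  -- the comparison function
  set φ : ℝ → ℝ := fun y => (u y * exp (γ*(y-τ)) - M) * exp ((β-γ)*(y-τ)) with hφ_def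
  set φ' : ℝ → ℝ := fun y =>
      (u' y * exp (γ*(y-τ)) + u y * (exp (γ*(y-τ)) * (γ*1))) * exp ((β-γ)*(y-τ))
      + (u y * exp (γ*(y-τ)) - M) * (exp ((β-γ)*(y-τ)) * ((β-γ)*1)) with hφ'_def
  have hφderiv : ∀ y : ℝ, τ < y → y ∉ S → HasDerivAt φ (φ' y) y := by
    intro y hy hyS
    have hu := hSderiv y hy hyS
    have h1 : HasDerivAt (fun z : ℝ => γ*(z-τ)) (γ*1) y :=
      ((hasDerivAt_id y).sub_const τ).const_mul γ
    have h2 : HasDerivAt (fun z : ℝ => (β-γ)*(z-τ)) ((β-γ)*1) y :=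
      ((hasDerivAt_id y).sub_const τ).const_mul (β-γ)
    exact ((hu.mul h1.exp).sub_const M).mul h2.exp
  have hφ'nonpos : ∀ y : ℝ, τ < y → y ∉ S →
      (∀ s ∈ Icc (-τ) (y - τ), u s ≤ M * exp (-γ * (s - τ))) → φ' y ≤ 0 := by
    intro y hy hyS hIH
    have hb := hkey y hy hyS hIH
    set E1 := exp (γ*(y-τ)) with hE1_def
    set E2 := exp ((β-γ)*(y-τ)) with hE2_def
    set Y := exp (-γ * (y-τ)) with hY_def
    have hE1pos : 0 < E1 := exp_pos _
    have hE2pos : 0 < E2 := exp_pos _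
    have hYE : Y * E1 = 1 := by
      rw [hY_def, hE1_def, ← exp_add]
      have : -γ * (y-τ) + γ*(y-τ) = 0 := by ring
      rw [this, exp_zero]
    have h5 : u' y * (E1 * E2) ≤ (M*(β-γ)*Y - β * u y) * (E1 * E2) :=
      mul_le_mul_of_nonneg_right hb (by positivity)
    have h7 : (M*(β-γ)*Y - β * u y) * (E1 * E2) = M*(β-γ)*E2 - β * u y * (E1 * E2) := by
      linear_combination (M*(β-γ)*E2) * hYE
    simp only [hφ'_def]
    nlinarith [h5, h7]
  -- induction
  have hind : ∀ n : ℕ, ∀ t : ℝ, t ∈ Icc (-τ) (τ + n*τ) → u t ≤ M * exp (-γ*(t-τ)) := by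
    intro n
    induction n with
    | zero =>
      intro t ht
      simp only [Nat.cast_zero, zero_mul, add_zero] at ht
      have h1 : u t ≤ M := hM_ub t ht
      have h2 : (1:ℝ) ≤ exp (-γ*(t-τ)) := by
        rw [← exp_zero]
        apply exp_le_exp.2
        nlinarith [ht.2]
      nlinarith
    | succ n ih =>
      intro t ht
      by_cases hcase : t ≤ τ + n*τ
      · exact ih t ⟨ht.1, hcase⟩
      · push_neg at hcase
        have hnτ : (0:ℝ) ≤ n*τ := by positivity
        have htτ : τ < t := lt_of_le_of_lt (by linarith) hcase
        have htup : t ≤ τ + n*τ + τ := by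
          have := ht.2
          push_cast at this ⊢
          linarith
        -- apply the antitone lemma to φ on [τ, t]
        have hφcont : ContinuousOn φ (Icc τ t) := by
          apply ContinuousOn.mul
          · apply ContinuousOn.sub
            · exact (hu_cont.mono (fun z hz => by
                simp only [mem_Ici]; have := hz.1; linarith)).mul
                (Real.continuous_exp.comp
                  (continuous_const.mul (continuous_id.sub continuous_const))).continuousOn
            · exact continuousOn_const
          · exact (Real.continuous_exp.comp
              (continuous_const.mul (continuous_id.sub continuous_const))).continuousOn
        have hφd : ∀ x ∈ Ioo τ t, x ∉ S → HasDerivAt φ (φ' x) x :=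
          fun x hx hxS => hφderiv x hx.1 hxS
        have hφd0 : ∀ x ∈ Ioo τ t, x ∉ S → φ' x ≤ 0 := by
          intro x hx hxS
          apply hφ'nonpos x hx.1 hxS
          intro s hs
          apply ih s
          refine ⟨hs.1, ?_⟩
          have := hs.2
          have := hx.2
          linarith
        have hφle := my_antitone_of_deriv_nonpos_countable hScount htτ.le hφcont hφd hφd0
        have hφτ : φ τ = u τ - M := by
          simp only [hφ_def, sub_self, mul_zero, exp_zero, mul_one]
        have hφτ0 : φ τ ≤ 0 := by
          rw [hφτ]
          have := hM_ub τ ⟨hττ, le_rfl⟩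
          linarith
        have hφt : φ t ≤ 0 := hφle.trans hφτ0
        simp only [hφ_def] at hφt
        have hE2pos : (0:ℝ) < exp ((β-γ)*(t-τ)) := exp_pos _
        have h6 : u t * exp (γ*(t-τ)) - M ≤ 0 := by
          by_contra hcon
          push_neg at hcon
          nlinarith
        have hYE : exp (-γ*(t-τ)) * exp (γ*(t-τ)) = 1 := by
          rw [← exp_add]
          have : -γ*(t-τ) + γ*(t-τ) = 0 := by ring
          rw [this, exp_zero]
        have hE1pos : (0:ℝ) < exp (γ*(t-τ)) := exp_pos _
        nlinarith [mul_le_mul_of_nonneg_right h6 (exp_pos (-γ*(t-τ))).le, hYE,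
          exp_pos (-γ*(t-τ))]
  intro t ht
  obtain ⟨n, hn⟩ := exists_nat_ge ((t - τ)/τ)
  apply hind n
  refine ⟨by linarith, ?_⟩
  rw [div_le_iff₀ hτ] at hn
  linarith

end
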